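/- Consider the closed-loop quadrotor angular dynamics f : ℝ⁶ → ℝ⁶ given by ẋ₁ = x₂, ẋ₂ = −1.5·x₄x₆ − 0.5·x₄·sin(x₂)cos(x₄) − x₁ − 2.5·x₂, ẋ₃ = x₄, ẋ₄ = 1.5·x₂x₆ + 0.5·x₂·sin(x₂)cos(x₄) − x₃ − 10·x₄, ẋ₅ = x₆, ẋ₆ = −x₅ − 0.8·x₆, and let V(x) = ∑_{i=1}^{6} xᵢ². Then the Lie derivative satisfies L_f V(x) = −5x₂² − 20x₄² − 1.6x₆² ≤ 0 for all x ∈ ℝ⁶. -/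

import Mathlib

/-- The Lie derivative `L_f V x = ∑ i, (∂V/∂xᵢ)(x) · fᵢ(x)` of `V : ℝⁿ → ℝ`
along the vector field `f : ℝⁿ → ℝⁿ`. -/
noncomputable def lieDeriv {n : ℕ} (V : (Fin n → ℝ) → ℝ)
    (f : (Fin n → ℝ) → (Fin n → ℝ)) (x : Fin n → ℝ) : ℝ :=
  ∑ i, fderiv ℝ V x (Pi.single i 1) * f x i

/-- The closed-loop quadrotor angular dynamics on `ℝ⁶`. -/
noncomputable def quadrotorField (x : Fin 6 → ℝ) : Fin 6 → ℝ :=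
  ![x 1,
    -1.5 * x 3 * x 5 - 0.5 * x 3 * Real.sin (x 1) * Real.cos (x 3)
      - x 0 - 2.5 * x 1,
    x 3,
    1.5 * x 1 * x 5 + 0.5 * x 1 * Real.sin (x 1) * Real.cos (x 3)
      - x 2 - 10 * x 3,
    x 5,
    -x 4 - 0.8 * x 5]


lemma sumsq_deriv {n : ℕ} (x : Fin n → ℝ) :
    HasFDerivAt (fun y : Fin n → ℝ => ∑ i, (y i) ^ 2)
      (∑ i : Fin n, (2 * x i) • (ContinuousLinearMap.proj i : (Fin n → ℝ) →L[ℝ] ℝ)) x := by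
  have h : ∀ i : Fin n, HasFDerivAt (fun y : Fin n → ℝ => (y i) ^ 2)
      ((2 * x i) • (ContinuousLinearMap.proj i : (Fin n → ℝ) →L[ℝ] ℝ)) x := by
    intro i
    have h0 := hasFDerivAt_apply (𝕜 := ℝ) i x
    have := h0.fun_mul h0
    rw [mul_comm]
    simpa [sq, mul_two, add_smul] using this
  simpa using HasFDerivAt.fun_sum (fun i _ => h i)

lemma vec6_five (a b c d e f : ℝ) : ![a,b,c,d,e,f] 5 = f := rfl

lemma fderiv_sumsq {n : ℕ} (x v : Fin n → ℝ) :
    fderiv ℝ (fun y : Fin n → ℝ => ∑ i, (y i) ^ 2) x v = ∑ i, 2 * x i * v i := by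
  rw [(sumsq_deriv x).fderiv]
  simp [ContinuousLinearMap.proj_apply]


/-- For `V(x) = ∑ xᵢ²` along the closed-loop quadrotor angular dynamics:
`L_f V = −5x₂² − 20x₄² − 1.6x₆² ≤ 0` for all `x ∈ ℝ⁶`. -/
theorem quadrotor_lie_derivative :
    ∀ x : Fin 6 → ℝ,
      lieDeriv (fun y => ∑ i, (y i) ^ 2) quadrotorField x
        = -5 * (x 1) ^ 2 - 20 * (x 3) ^ 2 - 1.6 * (x 5) ^ 2 ∧
      lieDeriv (fun y => ∑ i, (y i) ^ 2) quadrotorField x ≤ 0 := by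
  intro x
  have key : lieDeriv (fun y => ∑ i, (y i) ^ 2) quadrotorField x
      = -5 * (x 1) ^ 2 - 20 * (x 3) ^ 2 - 1.6 * (x 5) ^ 2 := by
    unfold lieDeriv quadrotorField
    have h : ∀ i : Fin 6, fderiv ℝ (fun y : Fin 6 → ℝ => ∑ j, (y j) ^ 2) x (Pi.single i 1)
        = 2 * x i := by
      intro i
      rw [fderiv_sumsq]
      simp [Pi.single_apply, Finset.sum_ite_eq']
    simp only [h]
    rw [Fin.sum_univ_six]
    norm_num [Matrix.cons_val_zero, Matrix.cons_val_one, Matrix.head_cons,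
      Matrix.cons_val_two, Matrix.tail_cons, Matrix.cons_val_three,
      Matrix.cons_val_four, Matrix.cons_val_fin_one, vec6_five]
    ring
  refine ⟨key, ?_⟩
  rw [key]
  nlinarith [sq_nonneg (x 1), sq_nonneg (x 3), sq_nonneg (x 5)]
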